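/- Let m ≥ 1 and let Φ : ℝᵐ × ℝᵐ → ℝᵐ × ℝᵐ be a C² map of the fibered form Φ(κ, λ) = (A(κ, λ), B(λ)) (the base component B depends only on λ). Suppose Φ is a symplectomorphism for the standard symplectic form ω₀ on ℝᵐ × ℝᵐ, ω₀((a,b),(c,d)) = ⟨a,d⟩ − ⟨b,c⟩, in the sense that at every point p and for all vectors u, v ∈ ℝᵐ × ℝᵐ one has ω₀(DΦ(p)u, DΦ(p)v) = ω₀(u,v). Suppose moreover Φ is odd (ℤ₂-equivariant) in the fibers: A(−κ, λ) = −A(κ, λ) for all (κ, λ). Then for all κ, λ ∈ ℝᵐ and all w ∈ ℝᵐ: ⟨A(κ, λ), DB(λ)w⟩ = ⟨κ, w⟩; that is, A(κ, λ) = ((DB(λ))ᵀ)⁻¹ κ, so Φ is exactly the cotangent lift of the base diffeomorphism (with no translation by a differential dG). -/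

import Mathlib

open scoped BigOperators

/-- The canonical symplectic form on `ℝᵐ × ℝᵐ` (coordinates `(κ, λ)`, `κ` the fiber
coordinates): `ω₀((a,b),(c,d)) = ⟨a,d⟩ − ⟨b,c⟩`. -/
noncomputable def symp (m : ℕ) (a b : (Fin m → ℝ) × (Fin m → ℝ)) : ℝ :=
  (∑ i, a.1 i * b.2 i) - (∑ i, a.2 i * b.1 i)

theorem stmt11 (m : ℕ) (hm : 1 ≤ m)
    (A : (Fin m → ℝ) × (Fin m → ℝ) → (Fin m → ℝ)) (B : (Fin m → ℝ) → (Fin m → ℝ))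
    (hC2 : ContDiff ℝ 2 (fun p : (Fin m → ℝ) × (Fin m → ℝ) => (A p, B p.2)))
    (hsymp : ∀ (p : (Fin m → ℝ) × (Fin m → ℝ)) (u v : (Fin m → ℝ) × (Fin m → ℝ)),
      symp m
        (fderiv ℝ (fun q : (Fin m → ℝ) × (Fin m → ℝ) => (A q, B q.2)) p u)
        (fderiv ℝ (fun q : (Fin m → ℝ) × (Fin m → ℝ) => (A q, B q.2)) p v) =
      symp m u v)
    (hodd : ∀ (κ lam : Fin m → ℝ), A (-κ, lam) = -A (κ, lam)) :
    ∀ (κ lam w : Fin m → ℝ),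
      ∑ i, A (κ, lam) i * (fderiv ℝ B lam w) i = ∑ i, κ i * w i := by
  have hFd : Differentiable ℝ (fun p : (Fin m → ℝ) × (Fin m → ℝ) => (A p, B p.2)) :=
    hC2.differentiable (by norm_num)
  have hA : Differentiable ℝ A := hFd.fst
  have hB : Differentiable ℝ B := by
    have h1 : Differentiable ℝ (fun p : (Fin m → ℝ) × (Fin m → ℝ) => B p.2) := hFd.snd
    have h2 : Differentiable ℝ (fun lam : Fin m → ℝ =>
        (((0 : Fin m → ℝ), lam) : (Fin m → ℝ) × (Fin m → ℝ))) :=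
      (differentiable_const _).prodMk differentiable_id
    exact h1.comp h2
  have hFderiv : ∀ p : (Fin m → ℝ) × (Fin m → ℝ),
      HasFDerivAt (fun p : (Fin m → ℝ) × (Fin m → ℝ) => (A p, B p.2))
        ((fderiv ℝ A p).prod ((fderiv ℝ B p.2).comp
          (ContinuousLinearMap.snd ℝ (Fin m → ℝ) (Fin m → ℝ)))) p := by
    intro p
    exact ((hA p).hasFDerivAt).prodMk (((hB p.2).hasFDerivAt).comp p (hasFDerivAt_snd))
  have key : ∀ (p : (Fin m → ℝ) × (Fin m → ℝ)) (κ w : Fin m → ℝ),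
      ∑ i, (fderiv ℝ A p (κ, 0)) i * (fderiv ℝ B p.2 w) i = ∑ i, κ i * w i := by
    intro p κ w
    have h := hsymp p (κ, 0) (0, w)
    rw [(hFderiv p).fderiv] at h
    simpa [symp] using h
  intro κ lam w
  set c : Fin m → ℝ := fderiv ℝ B lam w with hc
  set C : ℝ := ∑ i, κ i * w i with hC
  set g : ℝ → ℝ := fun t => ∑ i, A (t • κ, lam) i * c i with hg
  have hgt : ∀ t : ℝ, HasDerivAt g C t := by
    intro t
    have hpath : HasDerivAt (fun t : ℝ => ((t • κ, lam) : (Fin m → ℝ) × (Fin m → ℝ)))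
        (κ, 0) t := by
      have h1 : HasDerivAt (fun t : ℝ => t • κ) κ t := by
        simpa using (hasDerivAt_id t).smul_const κ
      exact h1.prodMk (hasDerivAt_const t lam)
    have hAt : HasDerivAt (fun t : ℝ => A (t • κ, lam))
        (fderiv ℝ A (t • κ, lam) (κ, 0)) t :=
      (hA (t • κ, lam)).hasFDerivAt.comp_hasDerivAt t hpath
    have hcomp : ∀ i : Fin m, HasDerivAt (fun t : ℝ => A (t • κ, lam) i * c i)
        ((fderiv ℝ A (t • κ, lam) (κ, 0)) i * c i) t := by
      intro i
      exact ((hasDerivAt_pi.mp hAt) i).mul_const (c i)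
    have hsum : HasDerivAt g (∑ i, (fderiv ℝ A (t • κ, lam) (κ, 0)) i * c i) t :=
      HasDerivAt.fun_sum (fun i _ => hcomp i)
    have := key (t • κ, lam) κ w
    rw [hC]
    rw [← this]
    exact hsum
  have hg0 : g 0 = 0 := by
    have h0 : A ((0 : Fin m → ℝ), lam) = 0 := by
      have h := hodd 0 lam
      rw [neg_zero] at h
      funext i
      have hi := congrFun h i
      simp only [Pi.neg_apply, Pi.zero_apply] at hi ⊢
      linarith
    simp [hg, h0]
  have hconst : ∀ t : ℝ, g t - C * t = g 0 - C * 0 := by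
    intro t
    have hd : ∀ s : ℝ, HasDerivAt (fun t : ℝ => g t - C * t) 0 s := by
      intro s
      have h1 : HasDerivAt (fun t : ℝ => C * t) C s := by
        simpa using (hasDerivAt_id s).const_mul C
      simpa using (hgt s).fun_sub h1
    exact is_const_of_deriv_eq_zero (fun s => (hd s).differentiableAt)
      (fun s => (hd s).deriv) t 0
  have h1 := hconst 1
  rw [hg0] at h1
  have : g 1 = C := by linarith
  simpa [hg, hc, hC] using this
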